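/- For every integer r > 4 there exists a vector space partition of PG(r-1,2) consisting of 2^{r-2} pairwise disjoint 2-dimensional subspaces (lines) together with one (r-2)-dimensional subspace; that is, these subspaces cover every 1-dimensional subspace (point) of F_2^r exactly once. -/

import Mathlib

/-- The ambient vector space `F_2^r`. -/
abbrev Vec (r : ℕ) := Fin r → ZMod 2

/-- A line of `PG(r-1,2)`: a 2-dimensional subspace of `F_2^r`. -/
def isLine {r : ℕ} (L : Submodule (ZMod 2) (Vec r)) : Prop :=
  Module.finrank (ZMod 2) L = 2

/-- A point of `PG(r-1,2)`: a 1-dimensional subspace of `F_2^r`. -/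
def isPoint {r : ℕ} (P : Submodule (ZMod 2) (Vec r)) : Prop :=
  Module.finrank (ZMod 2) P = 1

/-- A hyperplane of `PG(r-1,2)`: an `(r-1)`-dimensional subspace of `F_2^r`. -/
def isHyperplane {r : ℕ} (H : Submodule (ZMod 2) (Vec r)) : Prop :=
  Module.finrank (ZMod 2) H = r - 1

open scoped Classical in
/-- The number of members of the multiset `S` (of lines) contained in the subspace `H`. -/
noncomputable def linesIn {r : ℕ} (S : Multiset (Submodule (ZMod 2) (Vec r)))
    (H : Submodule (ZMod 2) (Vec r)) : ℕ :=
  Multiset.card (S.filter (fun L => L ≤ H))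

/-- An `(n,r,s)` system: a multiset of `n` lines of `PG(r-1,2)` such that every hyperplane
contains at most `s` of them and some hyperplane contains exactly `s` of them. -/
def IsSystem (r n s : ℕ) (S : Multiset (Submodule (ZMod 2) (Vec r))) : Prop :=
  Multiset.card S = n ∧ (∀ L ∈ S, isLine L) ∧
    (∀ H, isHyperplane H → linesIn S H ≤ s) ∧
    (∃ H, isHyperplane H ∧ linesIn S H = s)

open scoped Classical in
/-- The number of members of the multiset `𝒱` of subspaces containing the subspace `P`. -/
noncomputable def coverCount {r : ℕ} (𝒱 : Multiset (Submodule (ZMod 2) (Vec r)))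
    (P : Submodule (ZMod 2) (Vec r)) : ℕ :=
  Multiset.card (𝒱.filter (fun W => P ≤ W))




namespace VSPaux

abbrev F (m : ℕ) := GaloisField 2 m
abbrev V (m : ℕ) := (ZMod 2 × ZMod 2) × F m

noncomputable def φ (m : ℕ) : ZMod 2 →+* F m := algebraMap (ZMod 2) (F m)

noncomputable def lineV {m : ℕ} (ω a : F m) : Submodule (ZMod 2) (V m) :=
  Submodule.span (ZMod 2) {(((1 : ZMod 2), (0 : ZMod 2)), a), (((0 : ZMod 2), (1 : ZMod 2)), ω * a)}

noncomputable def bigV (m : ℕ) : Submodule (ZMod 2) (V m) :=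
  LinearMap.range (LinearMap.inr (ZMod 2) (ZMod 2 × ZMod 2) (F m))

lemma zmod2_cases (x : ZMod 2) : x = 0 ∨ x = 1 := by revert x; decide

lemma mem_bigV {m : ℕ} (v : V m) : v ∈ bigV m ↔ v.1 = 0 := by
  constructor
  · rintro ⟨w, rfl⟩; rfl
  · intro h; exact ⟨v.2, by ext <;> simp [h.symm]⟩

lemma mem_lineV {m : ℕ} (ω a : F m) (v : V m) :
    v ∈ lineV ω a ↔ (φ m v.1.1 + φ m v.1.2 * ω) * a = v.2 := by
  rw [lineV, Submodule.mem_span_pair]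
  constructor
  · rintro ⟨c, d, h⟩
    obtain ⟨⟨x, y⟩, w⟩ := v
    simp only [Prod.smul_mk, Prod.mk_add_mk, Prod.mk.injEq, smul_eq_mul] at h
    obtain ⟨⟨h1, h2⟩, h3⟩ := h
    simp only [mul_one, mul_zero, add_zero, zero_add] at h1 h2
    subst h1; subst h2
    rw [← h3]
    simp only [φ, Algebra.smul_def]
    ring
  · intro h
    obtain ⟨⟨x, y⟩, w⟩ := v
    dsimp only at h
    refine ⟨x, y, ?_⟩
    simp only [Prod.smul_mk, Prod.mk_add_mk, Prod.mk.injEq, smul_eq_mul]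
    refine ⟨⟨by ring, by ring⟩, ?_⟩
    rw [← h]
    simp only [φ, Algebra.smul_def]
    ring

lemma finrank_lineV {m : ℕ} (ω a : F m) : Module.finrank (ZMod 2) (lineV ω a) = 2 := by
  have hli : LinearIndependent (ZMod 2)
      ![((((1 : ZMod 2), (0 : ZMod 2)), a) : V m), (((0 : ZMod 2), (1 : ZMod 2)), ω * a)] := by
    rw [LinearIndependent.pair_iff]
    intro s t hst
    simp only [Prod.smul_mk, Prod.mk_add_mk, Prod.ext_iff, Prod.fst_zero, Prod.snd_zero,
      smul_eq_mul, mul_one, mul_zero, add_zero, zero_add] at hst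
    exact ⟨hst.1.1, hst.1.2⟩
  have hr : ({(((1 : ZMod 2), (0 : ZMod 2)), a), (((0 : ZMod 2), (1 : ZMod 2)), ω * a)} : Set (V m))
      = Set.range ![(((1 : ZMod 2), (0 : ZMod 2)), a), (((0 : ZMod 2), (1 : ZMod 2)), ω * a)] := by
    ext v; simp [Fin.exists_fin_two, or_comm]
  rw [lineV, hr, finrank_span_eq_card hli]
  simp

lemma finrank_bigV {m : ℕ} : Module.finrank (ZMod 2) (bigV m) = Module.finrank (ZMod 2) (F m) :=
  LinearMap.finrank_range_of_inj (LinearMap.inr_injective)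

end VSPaux

namespace VSPaux2
open VSPaux

noncomputable instance instFintypeF (m : ℕ) : Fintype (F m) := Fintype.ofFinite _

open scoped Classical in
lemma count_cover {m : ℕ} (ω : F m) (hω0 : ω ≠ 0) (hω1 : ω ≠ 1) (v : V m) (hv : v ≠ 0) :
    Multiset.countP (fun W => v ∈ W) (bigV m ::ₘ Finset.univ.val.map (lineV ω)) = 1 := by
  rw [Multiset.countP_cons, Multiset.countP_map]
  obtain ⟨⟨x, y⟩, w⟩ := v
  set μ : F m := φ m x + φ m y * ω with hμdef
  have hmem : ∀ a : F m, (((x, y), w) ∈ lineV ω a) ↔ μ * a = w := fun a => mem_lineV ω a _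
  by_cases hp : (x, y) = ((0 : ZMod 2), (0 : ZMod 2))
  · -- in bigV, in no line
    have hw : w ≠ 0 := by
      intro h; apply hv; rw [hp, h]; rfl
    have hμ : μ = 0 := by
      rw [hμdef, (Prod.mk.injEq _ _ _ _).mp hp |>.1, (Prod.mk.injEq _ _ _ _).mp hp |>.2]
      simp
    have h0 : Multiset.countP (fun a => ((x, y), w) ∈ lineV ω a) Finset.univ.val = 0 := by
      rw [Multiset.countP_eq_zero]
      intro a _ ha
      rw [hmem a, hμ, zero_mul] at ha
      exact hw ha.symm
    rw [← Multiset.countP_eq_card_filter, h0]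
    simp [mem_bigV, hp]
  · -- not in bigV, in exactly one line
    have hμ : μ ≠ 0 := by
      rcases zmod2_cases x with hx | hx <;> rcases zmod2_cases y with hy | hy <;>
        subst hx <;> subst hy <;> simp_all [hμdef]
      · intro h
        apply hω1
        have : ω = -1 := by linear_combination h
        rw [this, CharTwo.neg_eq]
    have hcond : ∀ a : F m, (((x, y), w) ∈ lineV ω a) ↔ a = μ⁻¹ * w := by
      intro a
      rw [hmem a]
      constructor
      · rintro rfl; field_simp
      · rintro rfl; field_simp
    have h1 : Multiset.countP (fun a => ((x, y), w) ∈ lineV ω a) Finset.univ.val = 1 := by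
      rw [Multiset.countP_eq_card_filter]
      have : Finset.univ.val.filter (fun a => ((x, y), w) ∈ lineV ω a)
          = (Finset.univ.filter (fun a => ((x, y), w) ∈ lineV ω a)).val := rfl
      rw [this]
      have : Finset.univ.filter (fun a => ((x, y), w) ∈ lineV ω a) = {μ⁻¹ * w} := by
        ext a
        simp [hcond a]
      rw [this]
      rfl
    rw [← Multiset.countP_eq_card_filter, h1]
    have hnb : ¬ (((x, y), w) ∈ bigV m) := by
      rw [mem_bigV]; exact hp
    simp [hnb]

end VSPaux2

section Main
open VSPaux VSPaux2

set_option maxHeartbeats 1000000 in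
/-- For every `r > 4` there is a vector space partition of `PG(r-1,2)` consisting of
`2^{r-2}` lines together with one `(r-2)`-dimensional subspace: every point is contained
in exactly one member. -/
theorem vsp_lines_and_big_subspace (r : ℕ) (hr : 4 < r) :
    ∃ (Ls : Multiset (Submodule (ZMod 2) (Vec r))) (A : Submodule (ZMod 2) (Vec r)),
      Multiset.card Ls = 2 ^ (r - 2) ∧ (∀ L ∈ Ls, isLine L) ∧
      Module.finrank (ZMod 2) A = r - 2 ∧
      ∀ P, isPoint P → coverCount (A ::ₘ Ls) P = 1 := by
  unfold isLine isPoint coverCount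
  classical
  set m := r - 2 with hmdef
  have hm0 : m ≠ 0 := by omega
  have hcardF : Fintype.card (F m) = 2 ^ m := by
    have h := GaloisField.card 2 m hm0
    rwa [Nat.card_eq_fintype_card] at h
  obtain ⟨ω, hω0, hω1⟩ : ∃ ω : F m, ω ≠ 0 ∧ ω ≠ 1 := by
    by_contra h
    push_neg at h
    have hsub : (Finset.univ : Finset (F m)) ⊆ {0, 1} := by
      intro a _
      by_cases ha : a = 0
      · simp [ha]
      · simp [h a ha]
    have h1 := Finset.card_le_card hsub
    have h2 : Finset.card ({0, 1} : Finset (F m)) ≤ 2 :=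
      le_trans (Finset.card_insert_le _ _) (by simp)
    rw [Finset.card_univ, hcardF] at h1
    have : 2 ^ 2 ≤ 2 ^ m := Nat.pow_le_pow_right (by norm_num) (by omega)
    omega
  have hfr : Module.finrank (ZMod 2) (V m) = Module.finrank (ZMod 2) (Fin r → ZMod 2) := by
    rw [Module.finrank_prod, Module.finrank_prod, Module.finrank_self,
      GaloisField.finrank 2 hm0, Module.finrank_fin_fun]
    omega
  let e : V m ≃ₗ[ZMod 2] (Fin r → ZMod 2) := LinearEquiv.ofFinrankEq _ _ hfr
  have hmm : ∀ (W : Submodule (ZMod 2) (V m)) (x : Fin r → ZMod 2),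
      x ∈ W.map (e : V m →ₗ[ZMod 2] (Fin r → ZMod 2)) ↔ e.symm x ∈ W := by
    intro W x
    rw [Submodule.mem_map]
    constructor
    · rintro ⟨u, hu, rfl⟩; simpa using hu
    · intro hx; exact ⟨e.symm x, hx, by simp⟩
  refine ⟨(Finset.univ.val.map (lineV ω)).map
      (Submodule.map (e : V m →ₗ[ZMod 2] (Fin r → ZMod 2))),
    (bigV m).map (e : V m →ₗ[ZMod 2] (Fin r → ZMod 2)), ?_, ?_, ?_, ?_⟩
  · rw [Multiset.card_map, Multiset.card_map]
    show Finset.univ.card = 2 ^ (r - 2)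
    rw [Finset.card_univ, hcardF]
  · intro L hL
    simp only [Multiset.mem_map, Finset.mem_val, Finset.mem_univ] at hL
    obtain ⟨W, ⟨a, _, rfl⟩, rfl⟩ := hL
    rw [LinearEquiv.finrank_map_eq]
    exact finrank_lineV ω a
  · rw [LinearEquiv.finrank_map_eq, finrank_bigV, GaloisField.finrank 2 hm0]
  · intro P hP
    have hPb : P ≠ ⊥ := by
      intro h
      rw [h, finrank_bot] at hP
      exact one_ne_zero hP.symm
    obtain ⟨u, hu, hu0⟩ := Submodule.exists_mem_ne_zero_of_ne_bot hPb
    have hspan : Submodule.span (ZMod 2) {u} = P := by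
      apply Submodule.eq_of_le_of_finrank_le
      · exact (Submodule.span_singleton_le_iff_mem u P).mpr hu
      · rw [hP, finrank_span_singleton hu0]
    have hv : e.symm u ≠ 0 := e.symm.map_ne_zero_iff.mpr hu0
    rw [← Multiset.countP_eq_card_filter, ← Multiset.map_cons, Multiset.countP_map,
      ← Multiset.countP_eq_card_filter]
    have hcongr : Multiset.countP
        (fun W : Submodule (ZMod 2) (V m) =>
          P ≤ Submodule.map (e : V m →ₗ[ZMod 2] (Fin r → ZMod 2)) W)
        (bigV m ::ₘ Finset.univ.val.map (lineV ω))
        = Multiset.countP (fun W => e.symm u ∈ W)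
          (bigV m ::ₘ Finset.univ.val.map (lineV ω)) := by
      refine Multiset.countP_congr rfl (fun W _ => propext ?_)
      rw [← hspan, Submodule.span_singleton_le_iff_mem]
      exact hmm W u
    rw [hcongr]
    exact count_cover ω hω0 hω1 (e.symm u) hv


end Main
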